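/- arXiv:1308.4650 — 2 statements merged into one kernel-verified Lean document; each statement's English description precedes it below -/
import Mathlib

section
/- Multisorted Piggyback Duality Theorem: Let A = ISP(M) where M is a finite set of finite D-based algebras of common type. For each M in M let Ω_M be a (possibly empty) subset of D(U(M), 2), and let the alter ego ~M be the multisorted topological structure on the disjoint union of the underlying sets of the members of M, with the discrete topology, with set of relations R equal to the union, over ω_1 in Ω_{M_1} and ω_2 in Ω_{M_2} (M_1, M_2 in M), of the sets R_{ω_1,ω_2}, and with set of operations G equal to the union of all hom-sets A(M_1, M_2) for M_1, M_2 in M. If the separation condition (Sep)_{M,Ω} holds, then ~M yields a multisorted duality on A; that is, for every algebra A in A the multisorted evaluation map e_A : A → ED(A), given by e_A(a)(M)(x) = x(a), is an isomorphism. -/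
open FirstOrder FirstOrder.Language FirstOrder.Language.Structure

namespace CoproductsPaper

variable {L : FirstOrder.Language.{0,0}}

/-- Pointwise structure on a product of `L`-structures. -/
instance piStructure {ι : Type} (M : ι → Type) [∀ i, L.Structure (M i)] :
    L.Structure (∀ i, M i) where
  funMap f x i := funMap f fun j => x j i
  RelMap r x := ∀ i, RelMap r fun j => x j i

/-- Pointwise structure on a binary product of `L`-structures. -/
instance prodStructure {M N : Type} [L.Structure M] [L.Structure N] :
    L.Structure (M × N) where
  funMap f x := (funMap f fun j => (x j).1, funMap f fun j => (x j).2)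
  RelMap r x := RelMap r (fun j => (x j).1) ∧ RelMap r fun j => (x j).2

/-- A choice of bounded-lattice symbols in the language `L`. -/
structure DSig (L : FirstOrder.Language.{0,0}) where
  meet : L.Functions 2
  join : L.Functions 2
  bot : L.Functions 0
  top : L.Functions 0

variable (s : DSig L)

/-- The induced meet operation. -/
def dmeet {X : Type} [L.Structure X] (a b : X) : X := funMap s.meet ![a, b]
/-- The induced join operation. -/
def djoin {X : Type} [L.Structure X] (a b : X) : X := funMap s.join ![a, b]
/-- The induced bottom element. -/
def dbot (X : Type) [L.Structure X] : X := funMap s.bot ![]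
/-- The induced top element. -/
def dtop (X : Type) [L.Structure X] : X := funMap s.top ![]

/-- The induced operations make `X` a bounded distributive lattice:
this is the property of having a `D`-reduct. -/
structure IsDAlg (X : Type) [L.Structure X] : Prop where
  meet_comm : ∀ a b : X, dmeet s a b = dmeet s b a
  join_comm : ∀ a b : X, djoin s a b = djoin s b a
  meet_assoc : ∀ a b c : X, dmeet s (dmeet s a b) c = dmeet s a (dmeet s b c)
  join_assoc : ∀ a b c : X, djoin s (djoin s a b) c = djoin s a (djoin s b c)
  absorb_meet : ∀ a b : X, dmeet s a (djoin s a b) = a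
  absorb_join : ∀ a b : X, djoin s a (dmeet s a b) = a
  meet_distrib : ∀ a b c : X, dmeet s a (djoin s b c) = djoin s (dmeet s a b) (dmeet s a c)
  bot_join : ∀ a : X, djoin s (dbot s X) a = a
  top_meet : ∀ a : X, dmeet s (dtop s X) a = a

/-- A `D`-morphism from the `D`-reduct of `X` to the two-element lattice `2 = Bool`. -/
def IsBoolDHom {X : Type} [L.Structure X] (ω : X → Bool) : Prop :=
  (∀ a b : X, ω (dmeet s a b) = (ω a && ω b)) ∧
  (∀ a b : X, ω (djoin s a b) = (ω a || ω b)) ∧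
  ω (dbot s X) = false ∧ ω (dtop s X) = true

/-- A class of `L`-structures. -/
abbrev ClassOf (L : FirstOrder.Language.{0,0}) : Type 1 := (X : Type) → L.Structure X → Prop

/-- Membership in `ISP M` for a (multi-generator) family `M`:
isomorphic copies of subalgebras of products of the `M i`, i.e. structures embeddable
into a product of members of the family. -/
def ISPc {ι : Type} (Mf : ι → Type) [∀ i, L.Structure (Mf i)] : ClassOf L :=
  fun X iX => ∃ (κ : Type) (g : κ → ι),
    Nonempty (@FirstOrder.Language.Embedding L X (∀ k, Mf (g k)) iX inferInstance)

/-- Membership in `ISP M` for a single generator. -/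
def ISPc1 (M : Type) [L.Structure M] : ClassOf L :=
  fun X iX => ∃ κ : Type,
    Nonempty (@FirstOrder.Language.Embedding L X (κ → M) iX inferInstance)

/-- The separation condition `(Sep)_{M,Ω}`. -/
def SepCond {ι : Type} (Mf : ι → Type) [∀ i, L.Structure (Mf i)]
    (Ω : ∀ i, Set (Mf i → Bool)) : Prop :=
  ∀ (i : ι) (a b : Mf i), a ≠ b →
    ∃ (j : ι) (u : Mf i →[L] Mf j) (ω : Mf j → Bool), ω ∈ Ω j ∧ ω (u a) ≠ ω (u b)

/-- The separation condition `(Sep)_{M,ω}` for a single algebra and single carrier map. -/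
def SepCond1 (M : Type) [L.Structure M] (ω : M → Bool) : Prop :=
  ∀ a b : M, a ≠ b → ∃ u : M →[L] M, ω (u a) ≠ ω (u b)

/-- The bounded sublattice `(ω₁,ω₂)^{-1}(≤)` of `M × N`. -/
def piggySet {M N : Type} (ω₁ : M → Bool) (ω₂ : N → Bool) : Set (M × N) :=
  {p | ω₁ p.1 ≤ ω₂ p.2}

/-- `R_{ω₁,ω₂}`: the set of subalgebras of `M × N` that are maximal with respect to
being contained in `(ω₁,ω₂)^{-1}(≤)`. -/
def RSet {M N : Type} [L.Structure M] [L.Structure N]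
    (ω₁ : M → Bool) (ω₂ : N → Bool) : Set (L.Substructure (M × N)) :=
  {r : L.Substructure (M × N) | (r : Set (M × N)) ⊆ piggySet ω₁ ω₂ ∧
    ∀ r' : L.Substructure (M × N), (r' : Set (M × N)) ⊆ piggySet ω₁ ω₂ → r ≤ r' → r' = r}

/-- `(C, ε)` is a coproduct co-cone for the family `K` within the class `Acl`. -/
def IsCoprod (Acl : ClassOf L) {κ : Type} (K : κ → Type) [iK : ∀ k, L.Structure (K k)]
    (C : Type) [iC : L.Structure C] (ε : ∀ k, K k →[L] C) : Prop :=
  Acl C iC ∧ ∀ (B : Type) [iB : L.Structure B], Acl B iB →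
    ∀ f : ∀ k, K k →[L] B, ∃! h : C →[L] B, ∀ k, h.comp (ε k) = f k

/-- `F` is free over the class `Acl` on the generators `gen : G → F`. -/
def IsFreeOver (Acl : ClassOf L) (G : Type) (F : Type) [iF : L.Structure F]
    (gen : G → F) : Prop :=
  Acl F iF ∧ ∀ (B : Type) [iB : L.Structure B], Acl B iB →
    ∀ v : G → B, ∃! h : F →[L] B, ∀ x : G, h (gen x) = v x

/-- A bounded-lattice homomorphism between bounded lattices (unbundled). -/
def IsBLHom {P Q : Type} [Lattice P] [BoundedOrder P] [Lattice Q] [BoundedOrder Q]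
    (h : P → Q) : Prop :=
  (∀ a b : P, h (a ⊓ b) = h a ⊓ h b) ∧ (∀ a b : P, h (a ⊔ b) = h a ⊔ h b) ∧
    h ⊥ = ⊥ ∧ h ⊤ = ⊤

/-- A `D`-morphism from the `D`-reduct of the `L`-structure `X` to a bounded lattice `Q`. -/
def IsRedHom {X Q : Type} [L.Structure X] [Lattice Q] [BoundedOrder Q] (f : X → Q) : Prop :=
  (∀ a b : X, f (dmeet s a b) = f a ⊓ f b) ∧ (∀ a b : X, f (djoin s a b) = f a ⊔ f b) ∧
    f (dbot s X) = ⊥ ∧ f (dtop s X) = ⊤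

/-- A `D`-morphism from a bounded lattice `P` to the `D`-reduct of the `L`-structure `X`. -/
def IsCoRedHom {P X : Type} [Lattice P] [BoundedOrder P] [L.Structure X] (f : P → X) : Prop :=
  (∀ a b : P, f (a ⊓ b) = dmeet s (f a) (f b)) ∧ (∀ a b : P, f (a ⊔ b) = djoin s (f a) (f b)) ∧
    f ⊥ = dbot s X ∧ f ⊤ = dtop s X

/-- `(P, η)` is the coproduct in `D` of the `D`-reducts of the family `K`. -/
def IsDCoprodOfReducts {κ : Type} (K : κ → Type) [∀ k, L.Structure (K k)]
    (P : Type) [DistribLattice P] [BoundedOrder P] (η : ∀ k, K k → P) : Prop :=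
  (∀ k, IsRedHom s (η k)) ∧
  ∀ (Q : Type) [DistribLattice Q] [BoundedOrder Q] (g : ∀ k, K k → Q),
    (∀ k, IsRedHom s (g k)) →
      ∃! h : {h : P → Q // IsBLHom h}, ∀ k, (h : P → Q) ∘ η k = g k

/-- The discrete product topology on a function space. -/
def powTop (A M : Type) : TopologicalSpace (A → M) :=
  @Pi.topologicalSpace A (fun _ => M) (fun _ => ⊥)

/-- The natural topology on the hom-set `A(A, M)`, inherited from `M^A` with `M` discrete. -/
def homTop (A M : Type) [L.Structure A] [L.Structure M] : TopologicalSpace (A →[L] M) :=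
  (powTop A M).induced (fun h => (h : A → M))

/-- The topology on `HU(A) = D(U(A), 2)`, inherited from `2^A`. -/
def huTop (X : Type) [L.Structure X] : TopologicalSpace {f : X → Bool // IsBoolDHom s f} :=
  (powTop X Bool).induced Subtype.val


section PiggyAux

/-- Homomorphisms commute with the induced meet. -/
theorem hom_dmeet {X Y : Type} [L.Structure X] [L.Structure Y] (s : DSig L)
    (h : X →[L] Y) (a b : X) : h (dmeet s a b) = dmeet s (h a) (h b) := by
  unfold dmeet
  rw [h.map_fun]
  congr 1
  funext i
  fin_cases i <;> rfl

/-- Homomorphisms commute with the induced join. -/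
theorem hom_djoin {X Y : Type} [L.Structure X] [L.Structure Y] (s : DSig L)
    (h : X →[L] Y) (a b : X) : h (djoin s a b) = djoin s (h a) (h b) := by
  unfold djoin
  rw [h.map_fun]
  congr 1
  funext i
  fin_cases i <;> rfl

/-- Homomorphisms preserve the induced bottom. -/
theorem hom_dbot {X Y : Type} [L.Structure X] [L.Structure Y] (s : DSig L)
    (h : X →[L] Y) : h (dbot s X) = dbot s Y := by
  unfold dbot
  rw [h.map_fun]
  congr 1
  funext i
  exact i.elim0

/-- Homomorphisms preserve the induced top. -/
theorem hom_dtop {X Y : Type} [L.Structure X] [L.Structure Y] (s : DSig L)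
    (h : X →[L] Y) : h (dtop s X) = dtop s Y := by
  unfold dtop
  rw [h.map_fun]
  congr 1
  funext i
  exact i.elim0

/-- Iterated join of a list of elements. -/
def bigJoin (s : DSig L) {X : Type} [L.Structure X] : List X → X
  | [] => dbot s X
  | a :: l => djoin s a (bigJoin s l)

/-- Iterated meet of a list of elements. -/
def bigMeet (s : DSig L) {X : Type} [L.Structure X] : List X → X
  | [] => dtop s X
  | a :: l => dmeet s a (bigMeet s l)

theorem bigJoin_eval {X : Type} [L.Structure X] (s : DSig L) (φ : X → Bool)
    (hj : ∀ a b, φ (djoin s a b) = (φ a || φ b)) (hb : φ (dbot s X) = false) :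
    ∀ l : List X, φ (bigJoin s l) = l.any φ := by
  intro l
  induction l with
  | nil => simpa [bigJoin] using hb
  | cons a l ih => simp [bigJoin, hj, ih]

theorem bigMeet_eval {X : Type} [L.Structure X] (s : DSig L) (φ : X → Bool)
    (hm : ∀ a b, φ (dmeet s a b) = (φ a && φ b)) (ht : φ (dtop s X) = true) :
    ∀ l : List X, φ (bigMeet s l) = l.all φ := by
  intro l
  induction l with
  | nil => simpa [bigMeet] using ht
  | cons a l ih => simp [bigMeet, hm, ih]

end PiggyAux

section Statement0

variable (s : DSig L) {ι : Type} (Mf : ι → Type) [∀ i, L.Structure (Mf i)]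
  (Ω : ∀ i, Set (Mf i → Bool)) (A : Type) [L.Structure A]

/-- The multisorted evaluation map `e_A`, viewed as a map into the full product
`∏_{M ∈ M} M^{A(A,M)}`: `e_A(a)(M)(x) = x(a)`. -/
def evalMap : A → ∀ i : ι, (A →[L] Mf i) → Mf i := fun a _ x => x a

/-- The underlying set of `E(D(A))`:  sort-preserving maps from the multisorted dual
`D(A)` to the alter ego, i.e. those elements `α` of `∏_{M ∈ M} M^{A(A,M)}` which
preserve every relation in `R = ⋃ R_{ω₁,ω₂}` (lifted pointwise), commute with every
homomorphism between members of `M` (acting by composition), and are continuous on each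
sort (hom-sets carrying the topology inherited from `M^A`, `M` discrete). -/
def dualMembers : Set (∀ i : ι, (A →[L] Mf i) → Mf i) :=
  {α |
    (∀ (i j : ι) (ω₁ : Mf i → Bool) (ω₂ : Mf j → Bool), ω₁ ∈ Ω i → ω₂ ∈ Ω j →
      ∀ r ∈ RSet (L := L) ω₁ ω₂, ∀ (x : A →[L] Mf i) (y : A →[L] Mf j),
        (∀ a : A, (x a, y a) ∈ r) → (α i x, α j y) ∈ r) ∧
    (∀ (i j : ι) (g : Mf i →[L] Mf j) (x : A →[L] Mf i), α j (g.comp x) = g (α i x)) ∧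
    (∀ i : ι, @Continuous _ _ (homTop (L := L) A (Mf i)) ⊥ (α i))}

/-- Multisorted Piggyback Duality Theorem, for `D`-based algebras.
Let `A = ISP(M)` where `M` is a finite set of finite `D`-based algebras of common type,
let `Ω_M ⊆ D(U(M), 2)` for each `M ∈ M`, and let the alter ego carry the discrete
topology, the relations `R = ⋃ R_{ω₁,ω₂}` and the operations
`G = ⋃ A(M₁,M₂)`.  If `(Sep)_{M,Ω}` holds, then the alter ego yields a multisorted
duality on `A`: for every `A ∈ A` the multisorted evaluation map
`e_A : A → ED(A)`, `e_A(a)(M)(x) = x(a)`, is an isomorphism, i.e. it is a bijection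
from `A` onto `E(D(A))`. -/
theorem multisorted_piggyback_duality
    (L : FirstOrder.Language.{0,0}) (s : DSig L)
    (ι : Type) [Fintype ι] (Mf : ι → Type) [∀ i, L.Structure (Mf i)] [∀ i, Fintype (Mf i)]
    (hDbased : ∀ i, IsDAlg s (Mf i))
    (Ω : ∀ i, Set (Mf i → Bool)) (hΩ : ∀ i, ∀ ω ∈ Ω i, IsBoolDHom s ω)
    (hsep : SepCond (L := L) Mf Ω)
    (A : Type) [iA : L.Structure A] (hA : ISPc (L := L) Mf A iA) :
    (∀ a : A, evalMap (L := L) Mf A a ∈ dualMembers (L := L) Mf Ω A) ∧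
    Function.Injective (evalMap (L := L) Mf A) ∧
    (∀ α ∈ dualMembers (L := L) Mf Ω A, ∃ a : A, evalMap (L := L) Mf A a = α) := by
  classical
  obtain ⟨κ, g, ⟨emb⟩⟩ := hA
  letI tM : ∀ i, TopologicalSpace (Mf i) := fun _ => ⊥
  haveI hdisc : ∀ i, DiscreteTopology (Mf i) := fun _ => ⟨rfl⟩
  letI tH : ∀ i, TopologicalSpace (A →[L] Mf i) := fun i => homTop A (Mf i)
  have hind : ∀ i, Topology.IsInducing
      (fun x : A →[L] Mf i => (x : A → Mf i)) := fun i => ⟨rfl⟩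
  refine ⟨?_, ?_, ?_⟩
  · -- membership of evaluations
    intro a
    refine ⟨?_, ?_, ?_⟩
    · intro i j ω₁ ω₂ _ _ r _ x y hxy
      exact hxy a
    · intro i j g' x
      rfl
    · intro i
      show Continuous fun x : A →[L] Mf i => (x : A → Mf i) a
      exact (continuous_apply a).comp (hind i).continuous
  · -- injectivity
    intro a b hab
    by_contra hne
    have hemb : emb a ≠ emb b := fun h => hne (emb.injective h)
    obtain ⟨k, hk⟩ : ∃ k, emb a k ≠ emb b k := by
      by_contra h
      push_neg at h
      exact hemb (funext h)
    let proj : (∀ k', Mf (g k')) →[L] Mf (g k) :=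
      { toFun := fun f => f k
        map_fun' := fun F v => rfl
        map_rel' := fun r v h => h k }
    have := congrFun (congrFun hab (g k)) (proj.comp emb.toHom)
    exact hk this
  · -- surjectivity
    intro α hα
    obtain ⟨hαR, hαG, hαC⟩ := hα
    -- key order-preservation lemma via the maximal piggyback relations
    have key : ∀ (i j : ι) (ω₁ : Mf i → Bool) (ω₂ : Mf j → Bool), ω₁ ∈ Ω i → ω₂ ∈ Ω j →
        ∀ (x : A →[L] Mf i) (y : A →[L] Mf j),
        (∀ a : A, ω₁ (x a) ≤ ω₂ (y a)) → ω₁ (α i x) ≤ ω₂ (α j y) := by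
      intro i j ω₁ ω₂ hω₁ hω₂ x y hle
      let pair : A →[L] Mf i × Mf j :=
        { toFun := fun a => (x a, y a)
          map_fun' := by
            intro n F v
            exact Prod.ext (x.map_fun F v) (y.map_fun F v)
          map_rel' := by
            intro n r v h
            exact ⟨x.map_rel r v h, y.map_rel r v h⟩ }
      have hr0sub : ((Substructure.map pair ⊤ : L.Substructure (Mf i × Mf j)) : Set (Mf i × Mf j))
          ⊆ piggySet ω₁ ω₂ := by
        rintro p hp
        rw [SetLike.mem_coe, Substructure.mem_map] at hp
        obtain ⟨a, -, rfl⟩ := hp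
        exact hle a
      have hzorn : ∃ m, Substructure.map pair ⊤ ≤ m ∧
          Maximal (· ∈ {r : L.Substructure (Mf i × Mf j) |
            (r : Set (Mf i × Mf j)) ⊆ piggySet ω₁ ω₂}) m := by
        refine zorn_le_nonempty₀
          {r : L.Substructure (Mf i × Mf j) | (r : Set (Mf i × Mf j)) ⊆ piggySet ω₁ ω₂}
          ?_ (Substructure.map pair ⊤) hr0sub
        intro c hcs hc y0 hy0
        refine ⟨sSup c, ?_, fun z hz => le_sSup hz⟩
        intro p hp
        rw [SetLike.mem_coe,
          Substructure.mem_sSup_of_directedOn ⟨y0, hy0⟩ hc.directedOn] at hp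
        obtain ⟨r', hr'c, hpr'⟩ := hp
        exact hcs hr'c hpr'
      obtain ⟨m, hm0, hmax⟩ := hzorn
      have hmR : m ∈ RSet (L := L) ω₁ ω₂ := by
        refine ⟨hmax.prop, fun r' hr' hle' => le_antisymm (hmax.2 hr' hle') hle'⟩
      have hmem := hαR i j ω₁ ω₂ hω₁ hω₂ m hmR x y
        (fun a => hm0 (Substructure.mem_map_of_mem pair (Substructure.mem_top a)))
      exact hmax.prop hmem
    -- the two compact sets of "piggyback functionals"
    let F : ∀ i, (Mf i → Bool) → (A →[L] Mf i) → (A → Bool) := fun i ω x a => ω (x a)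
    let Cset : Set (A → Bool) := ⋃ i, ⋃ ω ∈ Ω i, F i ω '' {x | ω (α i x) = true}
    let Dset : Set (A → Bool) := ⋃ i, ⋃ ω ∈ Ω i, F i ω '' {x | ω (α i x) = false}
    have hmemC : ∀ φ, φ ∈ Cset ↔ ∃ i ω x, ω ∈ Ω i ∧ ω (α i x) = true ∧
        φ = fun a => ω (x a) := by
      intro φ
      simp only [Cset, Set.mem_iUnion, Set.mem_image, Set.mem_setOf_eq]
      constructor
      · rintro ⟨i, ω, hω, x, hx, rfl⟩
        exact ⟨i, ω, x, hω, hx, rfl⟩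
      · rintro ⟨i, ω, x, hω, hx, rfl⟩
        exact ⟨i, ω, hω, x, hx, rfl⟩
    have hmemD : ∀ φ, φ ∈ Dset ↔ ∃ i ω x, ω ∈ Ω i ∧ ω (α i x) = false ∧
        φ = fun a => ω (x a) := by
      intro φ
      simp only [Dset, Set.mem_iUnion, Set.mem_image, Set.mem_setOf_eq]
      constructor
      · rintro ⟨i, ω, hω, x, hx, rfl⟩
        exact ⟨i, ω, x, hω, hx, rfl⟩
      · rintro ⟨i, ω, x, hω, hx, rfl⟩
        exact ⟨i, ω, hω, x, hx, rfl⟩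
    -- compactness of hom-spaces
    have hrange : ∀ i, IsClosed (Set.range (fun x : A →[L] Mf i => (x : A → Mf i))) := by
      intro i
      have hEq : Set.range (fun x : A →[L] Mf i => (x : A → Mf i)) =
          (⋂ (n : ℕ) (Fn : L.Functions n) (v : Fin n → A),
            {f : A → Mf i | f (funMap Fn v) = funMap Fn fun k => f (v k)}) ∩
          (⋂ (n : ℕ) (r : L.Relations n) (v : Fin n → A) (_ : RelMap r v),
            {f : A → Mf i | RelMap r fun k => f (v k)}) := by
        ext f
        constructor
        · rintro ⟨x, rfl⟩
          constructor
          · simp only [Set.mem_iInter, Set.mem_setOf_eq]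
            intro n Fn v
            exact x.map_fun Fn v
          · simp only [Set.mem_iInter, Set.mem_setOf_eq]
            intro n r v hv
            exact x.map_rel r v hv
        · rintro ⟨h1, h2⟩
          simp only [Set.mem_iInter, Set.mem_setOf_eq] at h1 h2
          exact ⟨⟨f, fun {n} Fn v => h1 n Fn v, fun {n} r v hv => h2 n r v hv⟩, rfl⟩
      rw [hEq]
      apply IsClosed.inter
      · refine isClosed_iInter fun n => isClosed_iInter fun Fn => isClosed_iInter fun v => ?_
        exact isClosed_eq (continuous_apply _)
          (continuous_of_discreteTopology.comp (continuous_pi fun k => continuous_apply (v k)))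
      · refine isClosed_iInter fun n => isClosed_iInter fun r => isClosed_iInter fun v =>
          isClosed_iInter fun _ => ?_
        have : {f : A → Mf i | RelMap r fun k => f (v k)} =
            (fun (f : A → Mf i) (k : Fin n) => f (v k)) ⁻¹' {w | RelMap r w} := rfl
        rw [this]
        exact (isClosed_discrete _).preimage (continuous_pi fun k => continuous_apply (v k))
    haveI hcs : ∀ i, CompactSpace (A →[L] Mf i) := by
      intro i
      constructor
      rw [(hind i).isCompact_iff, Set.image_univ]
      exact (hrange i).isCompact
    have hFcont : ∀ (i) (ω : Mf i → Bool), Continuous (F i ω) := by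
      intro i ω
      exact continuous_pi fun a => continuous_of_discreteTopology.comp
        ((continuous_apply a).comp (hind i).continuous)
    have hCcomp : IsCompact Cset := by
      refine isCompact_iUnion fun i => ?_
      refine Set.Finite.isCompact_biUnion (Set.toFinite (Ω i)) fun ω _ => ?_
      have hclosed : IsClosed {x : A →[L] Mf i | ω (α i x) = true} := by
        have : {x : A →[L] Mf i | ω (α i x) = true} =
            (fun x => ω (α i x)) ⁻¹' {true} := rfl
        rw [this]
        exact (isClosed_discrete _).preimage
          (continuous_of_discreteTopology.comp (hαC i))
      exact hclosed.isCompact.image (hFcont i ω)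
    have hDcomp : IsCompact Dset := by
      refine isCompact_iUnion fun i => ?_
      refine Set.Finite.isCompact_biUnion (Set.toFinite (Ω i)) fun ω _ => ?_
      have hclosed : IsClosed {x : A →[L] Mf i | ω (α i x) = false} := by
        have : {x : A →[L] Mf i | ω (α i x) = false} =
            (fun x => ω (α i x)) ⁻¹' {false} := rfl
        rw [this]
        exact (isClosed_discrete _).preimage
          (continuous_of_discreteTopology.comp (hαC i))
      exact hclosed.isCompact.image (hFcont i ω)
    -- no element of Cset is pointwise below an element of Dset
    have hsepCD : ∀ φ ∈ Cset, ∀ ψ ∈ Dset, ∃ a, φ a = true ∧ ψ a = false := by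
      intro φ hφ ψ hψ
      obtain ⟨i, ω₁, x, hω₁, hx, rfl⟩ := (hmemC φ).1 hφ
      obtain ⟨j, ω₂, y, hω₂, hy, rfl⟩ := (hmemD ψ).1 hψ
      by_contra h
      push_neg at h
      have hle : ∀ a, ω₁ (x a) ≤ ω₂ (y a) := by
        intro a
        cases h1 : ω₁ (x a)
        · exact Bool.false_le _
        · have := h a h1
          cases h2 : ω₂ (y a)
          · exact absurd h2 this
          · exact le_refl _
      have := key i j ω₁ ω₂ hω₁ hω₂ x y hle
      rw [hx, hy] at this
      exact absurd this (by simp)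
    -- lattice evaluation of piggyback functionals
    have hGoodJ : ∀ (j : ι) (ω : Mf j → Bool), ω ∈ Ω j → ∀ (x : A →[L] Mf j) (l : List A),
        ω (x (bigJoin s l)) = l.any fun a => ω (x a) := by
      intro j ω hω x l
      apply bigJoin_eval s (fun a => ω (x a))
      · intro a b
        rw [hom_djoin s x a b, (hΩ j ω hω).2.1]
      · rw [hom_dbot s x, (hΩ j ω hω).2.2.1]
    have hGoodM : ∀ (j : ι) (ω : Mf j → Bool), ω ∈ Ω j → ∀ (x : A →[L] Mf j) (l : List A),
        ω (x (bigMeet s l)) = l.all fun a => ω (x a) := by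
      intro j ω hω x l
      apply bigMeet_eval s (fun a => ω (x a))
      · intro a b
        rw [hom_dmeet s x a b, (hΩ j ω hω).1]
      · rw [hom_dtop s x, (hΩ j ω hω).2.2.2]
    have hGoodMem : ∀ φ ∈ Cset ∪ Dset,
        (∀ l : List A, φ (bigJoin s l) = l.any φ) ∧
        (∀ l : List A, φ (bigMeet s l) = l.all φ) := by
      intro φ hφ
      have hdec : ∃ (j : ι) (ω : Mf j → Bool) (x : A →[L] Mf j), ω ∈ Ω j ∧ φ = fun a => ω (x a) := by
        rcases hφ with h | h
        · obtain ⟨j, ω, x, hω, _, rfl⟩ := (hmemC φ).1 h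
          exact ⟨j, ω, x, hω, rfl⟩
        · obtain ⟨j, ω, x, hω, _, rfl⟩ := (hmemD φ).1 h
          exact ⟨j, ω, x, hω, rfl⟩
      obtain ⟨j, ω, x, hω, rfl⟩ := hdec
      exact ⟨hGoodJ j ω hω x, hGoodM j ω hω x⟩
    -- first compactness round
    have round1 : ∀ ψ ∈ Dset, ∃ aψ : A, ψ aψ = false ∧ ∀ φ ∈ Cset, φ aψ = true := by
      intro ψ hψ
      have hcover : Cset ⊆ ⋃ b : {a : A // ψ a = false}, {χ : A → Bool | χ b.1 = true} := by
        intro φ hφ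
        obtain ⟨a, ha1, ha2⟩ := hsepCD φ hφ ψ hψ
        exact Set.mem_iUnion.2 ⟨⟨a, ha2⟩, ha1⟩
      obtain ⟨t, ht⟩ := hCcomp.elim_finite_subcover
        (fun b : {a : A // ψ a = false} => {χ : A → Bool | χ b.1 = true})
        (fun b => by exact IsOpen.preimage (continuous_apply (A := fun _ : A => Bool) b.1) (isOpen_discrete {true})) hcover
      refine ⟨bigJoin s (t.toList.map Subtype.val), ?_, ?_⟩
      · rw [(hGoodMem ψ (Or.inr hψ)).1, List.any_eq_false]
        intro b hb
        obtain ⟨c, -, rfl⟩ := List.mem_map.1 hb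
        simp [c.2]
      · intro φ hφ
        rw [(hGoodMem φ (Or.inl hφ)).1, List.any_eq_true]
        obtain ⟨b, hbt, hb⟩ := Set.mem_iUnion₂.1 (ht hφ)
        exact ⟨b.1, List.mem_map.2 ⟨b, Finset.mem_toList.2 hbt, rfl⟩, hb⟩
    -- second compactness round
    have round2 : ∃ a : A, (∀ φ ∈ Cset, φ a = true) ∧ (∀ ψ ∈ Dset, ψ a = false) := by
      have hcover : Dset ⊆ ⋃ b : {a : A // ∀ φ ∈ Cset, φ a = true},
          {χ : A → Bool | χ b.1 = false} := by
        intro ψ hψ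
        obtain ⟨aψ, h1, h2⟩ := round1 ψ hψ
        exact Set.mem_iUnion.2 ⟨⟨aψ, h2⟩, h1⟩
      obtain ⟨t, ht⟩ := hDcomp.elim_finite_subcover
        (fun b : {a : A // ∀ φ ∈ Cset, φ a = true} => {χ : A → Bool | χ b.1 = false})
        (fun b => by exact IsOpen.preimage (continuous_apply (A := fun _ : A => Bool) b.1) (isOpen_discrete {false})) hcover
      refine ⟨bigMeet s (t.toList.map Subtype.val), ?_, ?_⟩
      · intro φ hφ
        rw [(hGoodMem φ (Or.inl hφ)).2, List.all_eq_true]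
        intro b hb
        obtain ⟨c, -, rfl⟩ := List.mem_map.1 hb
        exact c.2 φ hφ
      · intro ψ hψ
        rw [(hGoodMem ψ (Or.inr hψ)).2, List.all_eq_false]
        obtain ⟨b, hbt, hb⟩ := Set.mem_iUnion₂.1 (ht hψ)
        refine ⟨b.1, List.mem_map.2 ⟨b, Finset.mem_toList.2 hbt, rfl⟩, ?_⟩
        simp only [Set.mem_setOf_eq] at hb
        simp [hb]
    obtain ⟨a, haC, haD⟩ := round2
    refine ⟨a, ?_⟩
    funext i x
    show x a = α i x
    by_contra hne
    obtain ⟨j, u, ω, hω, hωne⟩ := hsep i (x a) (α i x) hne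
    have hy : α j (u.comp x) = u (α i x) := hαG i j u x
    have heval : ω ((u.comp x) a) = ω (α j (u.comp x)) := by
      cases hbool : ω (α j (u.comp x))
      · have hmem : (fun a' => ω ((u.comp x) a')) ∈ Dset :=
          (hmemD _).2 ⟨j, ω, u.comp x, hω, hbool, rfl⟩
        exact haD _ hmem
      · have hmem : (fun a' => ω ((u.comp x) a')) ∈ Cset :=
          (hmemC _).2 ⟨j, ω, u.comp x, hω, hbool, rfl⟩
        exact haC _ hmem
    rw [hy] at heval
    exact hωne heval

end Statement0

end CoproductsPaper
end

section
/- Joint Surjectivity Lemma: Let A = ISP(M) where M is a finite set of finite D-based algebras, and for each M in M let Ω_M be a (possibly empty) subset of D(U(M), 2), with Ω the union of the Ω_M. Then the following are equivalent: (1) the separation condition (Sep)_{M,Ω} holds; (2) for every A in A and all a ≠ b in A there exist M in M, ω in Ω_M and x in A(A, M) such that ω(x(a)) ≠ ω(x(b)); (3) for every A in A and every y in HU(A) there exist M in M, ω in Ω_M and x in A(A, M) such that y = ω ∘ x. -/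
open FirstOrder FirstOrder.Language FirstOrder.Language.Structure

namespace CoproductsPaper

variable {L : FirstOrder.Language.{0,0}}

variable (s : DSig L)

-- ### aux lemmas

section Maps
variable {X Y : Type} [L.Structure X] [L.Structure Y] (f : X →[L] Y)

lemma map_dmeet (a b : X) : f (dmeet s a b) = dmeet s (f a) (f b) := by
  unfold dmeet; rw [f.map_fun]; congr 1; funext j; fin_cases j <;> rfl

lemma map_djoin (a b : X) : f (djoin s a b) = djoin s (f a) (f b) := by
  unfold djoin; rw [f.map_fun]; congr 1; funext j; fin_cases j <;> rfl

lemma map_dbot : f (dbot s X) = dbot s Y := by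
  unfold dbot; rw [f.map_fun]; congr 1; funext j; exact j.elim0

lemma map_dtop : f (dtop s X) = dtop s Y := by
  unfold dtop; rw [f.map_fun]; congr 1; funext j; exact j.elim0

lemma IsBoolDHom.comp {ω : Y → Bool} (hω : IsBoolDHom s ω) :
    IsBoolDHom s (ω ∘ f) := by
  refine ⟨fun a b => ?_, fun a b => ?_, ?_, ?_⟩ <;>
    simp only [Function.comp_apply, map_dmeet, map_djoin, map_dbot, map_dtop,
      hω.1, hω.2.1, hω.2.2.1, hω.2.2.2]
end Maps

section Pi
variable {κ : Type} (K : κ → Type) [∀ k, L.Structure (K k)]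

lemma pi_dmeet (a b : ∀ k, K k) (k : κ) : dmeet s a b k = dmeet s (a k) (b k) := by
  show funMap s.meet (fun j => ![a,b] j k) = _
  congr 1; funext j; fin_cases j <;> rfl

lemma pi_djoin (a b : ∀ k, K k) (k : κ) : djoin s a b k = djoin s (a k) (b k) := by
  show funMap s.join (fun j => ![a,b] j k) = _
  congr 1; funext j; fin_cases j <;> rfl

lemma pi_dbot (k : κ) : dbot s (∀ k, K k) k = dbot s (K k) := by
  show funMap s.bot (fun j => (![] : Fin 0 → ∀ k, K k) j k) = _
  congr 1; funext j; exact j.elim0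

lemma pi_dtop (k : κ) : dtop s (∀ k, K k) k = dtop s (K k) := by
  show funMap s.top (fun j => (![] : Fin 0 → ∀ k, K k) j k) = _
  congr 1; funext j; exact j.elim0

lemma isDAlg_pi (h : ∀ k, IsDAlg s (K k)) : IsDAlg s (∀ k, K k) := by
  constructor <;> intros <;> funext k <;>
    simp only [pi_dmeet, pi_djoin, pi_dbot, pi_dtop] <;>
    first
      | exact (h k).meet_comm _ _
      | exact (h k).join_comm _ _
      | exact (h k).meet_assoc _ _ _
      | exact (h k).join_assoc _ _ _
      | exact (h k).absorb_meet _ _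
      | exact (h k).absorb_join _ _
      | exact (h k).meet_distrib _ _ _
      | exact (h k).bot_join _
      | exact (h k).top_meet _

/-- Projection hom from a product. -/
def projHom (k : κ) : (∀ k, K k) →[L] K k where
  toFun v := v k
  map_fun' _ _ := rfl
  map_rel' _ x h := h k

end Pi

lemma emb_dmeet {X Y : Type} [L.Structure X] [L.Structure Y] (e : X ↪[L] Y) (a b : X) :
    e (dmeet s a b) = dmeet s (e a) (e b) := by
  simpa using map_dmeet s e.toHom a b

lemma emb_djoin {X Y : Type} [L.Structure X] [L.Structure Y] (e : X ↪[L] Y) (a b : X) :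
    e (djoin s a b) = djoin s (e a) (e b) := by
  simpa using map_djoin s e.toHom a b

lemma emb_dbot {X Y : Type} [L.Structure X] [L.Structure Y] (e : X ↪[L] Y) :
    e (dbot s X) = dbot s Y := by
  simpa using map_dbot s e.toHom

lemma emb_dtop {X Y : Type} [L.Structure X] [L.Structure Y] (e : X ↪[L] Y) :
    e (dtop s X) = dtop s Y := by
  simpa using map_dtop s e.toHom

lemma isDAlg_of_emb {X Y : Type} [L.Structure X] [L.Structure Y]
    (e : X ↪[L] Y) (h : IsDAlg s Y) : IsDAlg s X := by
  have inj := e.injective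
  constructor <;> intros <;> apply inj <;>
    simp only [emb_dmeet, emb_djoin, emb_dbot, emb_dtop] <;>
    first
      | exact h.meet_comm _ _
      | exact h.join_comm _ _
      | exact h.meet_assoc _ _ _
      | exact h.join_assoc _ _ _
      | exact h.absorb_meet _ _
      | exact h.absorb_join _ _
      | exact h.meet_distrib _ _ _
      | exact h.bot_join _
      | exact h.top_meet _

-- Lattice structure from IsDAlg
section Lat
variable {X : Type} [L.Structure X]

/-- Distributive lattice structure induced by a `D`-reduct. -/
def IsDAlg.lat (h : IsDAlg s X) : DistribLattice X := by
  letI : Max X := ⟨djoin s⟩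
  letI : Min X := ⟨dmeet s⟩
  letI lat : Lattice X :=
    Lattice.mk' h.join_comm h.join_assoc h.meet_comm h.meet_assoc
      (fun a b => h.absorb_join a b) (fun a b => h.absorb_meet a b)
  exact DistribLattice.ofInfSupLe (fun a b c => le_of_eq (h.meet_distrib a b c))

lemma IsDAlg.inf_def (h : IsDAlg s X) (a b : X) :
    (letI := h.lat s; a ⊓ b) = dmeet s a b := rfl

lemma IsDAlg.sup_def (h : IsDAlg s X) (a b : X) :
    (letI := h.lat s; a ⊔ b) = djoin s a b := rfl

/-- Bounded order for the induced lattice. -/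
def IsDAlg.bdd (h : IsDAlg s X) :
    letI := h.lat s; BoundedOrder X := by
  letI := h.lat s
  exact {
    top := dtop s X
    bot := dbot s X
    le_top := fun a => inf_eq_left.mp (by rw [h.inf_def, h.meet_comm]; exact h.top_meet a)
    bot_le := fun a => sup_eq_right.mp (by rw [h.sup_def]; exact h.bot_join a) }

lemma IsDAlg.top_def (h : IsDAlg s X) :
    (letI := h.lat s; letI := h.bdd s; (⊤ : X)) = dtop s X := rfl

lemma IsDAlg.bot_def (h : IsDAlg s X) :
    (letI := h.lat s; letI := h.bdd s; (⊥ : X)) = dbot s X := rfl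

end Lat

-- ### Prime separation in finite distributive lattices
lemma sep_of_not_le {X : Type} [DistribLattice X] [BoundedOrder X] [Finite X]
    {a b : X} (hab : ¬ a ≤ b) :
    ∃ f : X → Bool, (∀ c d, f (c ⊓ d) = (f c && f d)) ∧ (∀ c d, f (c ⊔ d) = (f c || f d)) ∧
      f ⊥ = false ∧ f ⊤ = true ∧ f a = true ∧ f b = false := by
  classical
  obtain ⟨j, hjS, hmin⟩ : ∃ j ∈ {x : X | x ≤ a ∧ ¬ x ≤ b},
      ∀ x ∈ {x : X | x ≤ a ∧ ¬ x ≤ b}, id x ≤ id j → id j = id x := by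
    obtain ⟨j, hj⟩ := (Set.toFinite {x : X | x ≤ a ∧ ¬ x ≤ b}).exists_minimal ⟨a, le_rfl, hab⟩
    exact ⟨j, hj.1, fun x hx hle => le_antisymm (hj.2 hx hle) hle⟩
  obtain ⟨hja, hjb⟩ := hjS
  have hprime : ∀ c d : X, j ≤ c ⊔ d → j ≤ c ∨ j ≤ d := by
    intro c d hcd
    by_contra hcon
    push_neg at hcon
    obtain ⟨hc, hd⟩ := hcon
    have hjc : j ⊓ c ≤ b := by
      by_contra hjc
      have : j ⊓ c ∈ {x : X | x ≤ a ∧ ¬ x ≤ b} := ⟨le_trans inf_le_left hja, hjc⟩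
      have := hmin _ this inf_le_left
      exact hc (by rw [← inf_eq_left]; exact this.symm)
    have hjd : j ⊓ d ≤ b := by
      by_contra hjd
      have : j ⊓ d ∈ {x : X | x ≤ a ∧ ¬ x ≤ b} := ⟨le_trans inf_le_left hja, hjd⟩
      have := hmin _ this inf_le_left
      exact hd (by rw [← inf_eq_left]; exact this.symm)
    have hj : j = j ⊓ c ⊔ j ⊓ d := by
      rw [← inf_sup_left, inf_eq_left.mpr hcd]
    exact hjb (hj ▸ sup_le hjc hjd)
  refine ⟨fun x => decide (j ≤ x), fun c d => ?_, fun c d => ?_, ?_, ?_, ?_, ?_⟩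
  · simp [le_inf_iff]
  · have : j ≤ c ⊔ d ↔ j ≤ c ∨ j ≤ d :=
      ⟨hprime c d, fun h => h.elim (fun h => h.trans le_sup_left) fun h => h.trans le_sup_right⟩
    simp [this]
  · have : ¬ j ≤ ⊥ := fun h => hjb (h.trans bot_le)
    simp [this]
  · simp
  · simp [hja]
  · simp [hjb]

lemma finite_sep {X : Type} [L.Structure X] [Finite X] (h : IsDAlg s X)
    {a b : X} (hab : a ≠ b) : ∃ f : X → Bool, IsBoolDHom s f ∧ f a ≠ f b := by
  classical
  letI := h.lat s
  letI := h.bdd s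
  have key : ∀ c d : X, ¬ c ≤ d → ∃ f : X → Bool, IsBoolDHom s f ∧ f c ≠ f d := by
    intro c d hcd
    obtain ⟨f, h1, h2, h3, h4, h5, h6⟩ := sep_of_not_le hcd
    exact ⟨f, ⟨fun u v => h1 u v, fun u v => h2 u v, h3, h4⟩, by simp [h5, h6]⟩
  rcases Classical.em (a ≤ b) with hle | hle
  · obtain ⟨f, hf, hne⟩ := key b a (fun hba => hab (le_antisymm hle hba))
    exact ⟨f, hf, hne.symm⟩
  · exact key a b hle
-- ### Ultrafilter helpers
lemma ultra_const {α β : Type} [Finite β] (u : Ultrafilter α) (f : α → β) :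
    ∃ b, {a | f a = b} ∈ u := by
  by_contra hc
  push_neg at hc
  have h1 : ∀ b : β, {a | f a ≠ b} ∈ u := by
    intro b
    have := Ultrafilter.compl_mem_iff_notMem.mpr (hc b)
    simpa [Set.compl_setOf] using this
  have h2 : (⋂ b : β, {a | f a ≠ b}) ∈ u := (Filter.iInter_mem).mpr h1
  have h3 : (⋂ b : β, {a : α | f a ≠ b}) = ∅ := by
    ext a; simp
  rw [h3] at h2
  exact (Filter.empty_notMem (u : Filter α)) h2
lemma main23 {ι : Type} [Finite ι] (Mf : ι → Type) [∀ i, L.Structure (Mf i)]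
    [∀ i, Finite (Mf i)] (hD : ∀ i, IsDAlg s (Mf i))
    (Ω : ∀ i, Set (Mf i → Bool)) (hΩ : ∀ i, ∀ ω ∈ Ω i, IsBoolDHom s ω)
    (h2 : ∀ (A : Type) [iA : L.Structure A], ISPc (L := L) Mf A iA → ∀ a b : A, a ≠ b →
      ∃ (i : ι) (ω : Mf i → Bool) (x : A →[L] Mf i), ω ∈ Ω i ∧ ω (x a) ≠ ω (x b))
    (A : Type) [iA : L.Structure A] (hA : ISPc (L := L) Mf A iA) (y : A → Bool)
    (hy : IsBoolDHom s y) :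
    ∃ (i : ι) (ω : Mf i → Bool) (x : A →[L] Mf i), ω ∈ Ω i ∧ y = ω ∘ x := by
  classical
  obtain ⟨κ, g, ⟨e⟩⟩ := hA
  have hDA : IsDAlg s A :=
    isDAlg_of_emb s e (isDAlg_pi s (fun k => Mf (g k)) (fun k => hD (g k)))
  letI := hDA.lat s
  letI := hDA.bdd s
  -- Finset inf/sup lemmas for `y`
  have yinf : ∀ G : Finset A, (∀ c ∈ G, y c = true) → y (G.inf id) = true := by
    intro G
    induction G using Finset.induction_on with
    | empty => intro _; rw [Finset.inf_empty]; exact hy.2.2.2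
    | @insert c G hc ih =>
        intro hall
        rw [Finset.inf_insert]
        have h' : y (id c ⊓ G.inf id) = (y c && y (G.inf id)) := hy.1 _ _
        rw [h', hall c (Finset.mem_insert_self _ _),
          ih (fun d hd => hall d (Finset.mem_insert_of_mem hd))]
        rfl
  have ysup : ∀ G : Finset A, (∀ c ∈ G, y c = false) → y (G.sup id) = false := by
    intro G
    induction G using Finset.induction_on with
    | empty => intro _; rw [Finset.sup_empty]; exact hy.2.2.1
    | @insert c G hc ih =>
        intro hall
        rw [Finset.sup_insert]
        have h' : y (id c ⊔ G.sup id) = (y c || y (G.sup id)) := hy.2.1 _ _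
        rw [h', hall c (Finset.mem_insert_self _ _),
          ih (fun d hd => hall d (Finset.mem_insert_of_mem hd))]
        rfl
  -- finite stage
  have stage : ∀ F : Finset A, ∃ (i : ι) (ω : Mf i → Bool) (x : A →[L] Mf i),
      ω ∈ Ω i ∧ ∀ c ∈ F, ω (x c) = y c := by
    intro F
    set T := F.filter (fun c => y c = true) with hT
    set Fl := F.filter (fun c => y c = false) with hFl
    set a := T.inf id with ha
    set b := Fl.sup id with hb
    have hya : y a = true := yinf T (fun c hc => (Finset.mem_filter.mp hc).2)
    have hyb : y b = false := ysup Fl (fun c hc => (Finset.mem_filter.mp hc).2)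
    have hne : dmeet s a b ≠ a := by
      intro hcontra
      have h' : y (dmeet s a b) = (y a && y b) := hy.1 a b
      rw [hcontra, hya, hyb] at h'
      simp at h'
    obtain ⟨i, ω, x, hω, hsep⟩ := h2 A ⟨κ, g, ⟨e⟩⟩ (dmeet s a b) a hne
    have hz : IsBoolDHom s (ω ∘ x) := IsBoolDHom.comp s x (hΩ i ω hω)
    set z : A → Bool := ω ∘ x with hzdef
    have hz1 : z (dmeet s a b) = (z a && z b) := hz.1 a b
    have hsep' : z (dmeet s a b) ≠ z a := hsep
    rw [hz1] at hsep'
    have hza : z a = true := by revert hsep'; cases z a <;> simp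
    have hzb : z b = false := by rw [hza] at hsep'; revert hsep'; cases z b <;> simp
    refine ⟨i, ω, x, hω, fun c hc => ?_⟩
    cases hyc : y c with
    | true =>
        have hle : a ≤ c := by
          rw [ha]; exact Finset.inf_le (f := id) (Finset.mem_filter.mpr ⟨hc, hyc⟩)
        have hmc : dmeet s a c = a := inf_eq_left.mpr hle
        have h' : z (dmeet s a c) = (z a && z c) := hz.1 a c
        rw [hmc, hza] at h'
        have : z c = true := by simpa using h'.symm
        exact this
    | false =>
        have hle : c ≤ b := by
          rw [hb]; exact Finset.le_sup (f := id) (Finset.mem_filter.mpr ⟨hc, hyc⟩)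
        have hjc : djoin s b c = b := sup_eq_left.mpr hle
        have h' : z (djoin s b c) = (z b || z c) := hz.2.1 b c
        rw [hjc, hzb] at h'
        have : z c = false := by simpa using h'.symm
        exact this
  -- ultrafilter stage
  let u : Ultrafilter (Finset A) := Ultrafilter.of Filter.atTop
  have humem : ∀ a : A, {F : Finset A | a ∈ F} ∈ u := by
    intro a
    have h1 : {F : Finset A | {a} ≤ F} ∈ (Filter.atTop : Filter (Finset A)) :=
      Filter.mem_atTop {a}
    have h2' : {F : Finset A | {a} ≤ F} ∈ u := Ultrafilter.of_le Filter.atTop h1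
    have : {F : Finset A | {a} ≤ F} = {F : Finset A | a ∈ F} := by
      ext F; simp [Finset.singleton_subset_iff]
    rwa [this] at h2'
  set P : ι → Set (Finset A) := fun i =>
    {F | ∃ (ω : Mf i → Bool) (x : A →[L] Mf i), ω ∈ Ω i ∧ ∀ c ∈ F, ω (x c) = y c} with hP
  have hcover : ∃ i, P i ∈ u := by
    by_contra hc
    push_neg at hc
    have h1 : ∀ i, (P i)ᶜ ∈ u := fun i => Ultrafilter.compl_mem_iff_notMem.mpr (hc i)
    have h2' : (⋂ i, (P i)ᶜ) ∈ u := (Filter.iInter_mem).mpr h1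
    obtain ⟨F, hF⟩ := Filter.nonempty_of_mem h2'
    simp only [Set.mem_iInter, Set.mem_compl_iff] at hF
    obtain ⟨i, ω, x, hω, hval⟩ := stage F
    exact hF i ⟨ω, x, hω, hval⟩
  obtain ⟨i, hPi⟩ := hcover
  -- choose witnesses
  have hsel : ∀ F : Finset A, ∃ (ω : Mf i → Bool) (xf : A → Mf i),
      F ∈ P i → ω ∈ Ω i ∧ (∃ x : A →[L] Mf i, xf = ⇑x) ∧ ∀ c ∈ F, ω (xf c) = y c := by
    intro F
    by_cases hF : F ∈ P i
    · obtain ⟨ω, x, hω, hx⟩ := hF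
      exact ⟨ω, ⇑x, fun _ => ⟨hω, ⟨x, rfl⟩, hx⟩⟩
    · exact ⟨fun _ => false, fun _ => dbot s (Mf i), fun h => absurd h hF⟩
  choose W Xf hWX using hsel
  obtain ⟨ω, hωmem⟩ := ultra_const u W
  have hωΩ : ω ∈ Ω i := by
    obtain ⟨F, hF1, hF2⟩ := Filter.nonempty_of_mem (Filter.inter_mem hPi hωmem)
    have := (hWX F hF1).1
    rwa [hF2] at this
  have hxc := fun a : A => ultra_const u (fun F => Xf F a)
  choose xl hxl using hxc
  have hhom : ∀ {n : ℕ} (fs : L.Functions n) (v : Fin n → A),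
      xl (funMap fs v) = funMap fs (xl ∘ v) := by
    intro n fs v
    have hmem : (P i ∩ {F | Xf F (funMap fs v) = xl (funMap fs v)} ∩
        ⋂ j, {F | Xf F (v j) = xl (v j)}) ∈ u :=
      Filter.inter_mem (Filter.inter_mem hPi (hxl _)) ((Filter.iInter_mem).mpr fun j => hxl _)
    obtain ⟨F, ⟨⟨hF1, hF2⟩, hF3⟩⟩ := Filter.nonempty_of_mem hmem
    simp only [Set.mem_iInter, Set.mem_setOf_eq, Set.mem_inter_iff] at hF1 hF2 hF3
    obtain ⟨hωF, ⟨xh, hxh⟩, _⟩ := hWX F hF1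
    calc xl (funMap fs v) = Xf F (funMap fs v) := hF2.symm
      _ = xh (funMap fs v) := by rw [hxh]
      _ = funMap fs (⇑xh ∘ v) := xh.map_fun fs v
      _ = funMap fs (xl ∘ v) := by
          congr 1; funext j
          have := hF3 j
          rw [hxh] at this
          exact this
  have hrel : ∀ {n : ℕ} (r : L.Relations n) (v : Fin n → A),
      RelMap r v → RelMap r (xl ∘ v) := by
    intro n r v hv
    have hmem : (P i ∩ ⋂ j, {F | Xf F (v j) = xl (v j)}) ∈ u :=
      Filter.inter_mem hPi ((Filter.iInter_mem).mpr fun j => hxl _)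
    obtain ⟨F, hF1, hF3⟩ := Filter.nonempty_of_mem hmem
    simp only [Set.mem_iInter, Set.mem_setOf_eq] at hF3
    obtain ⟨hωF, ⟨xh, hxh⟩, _⟩ := hWX F hF1
    have : (xl ∘ v) = (⇑xh ∘ v) := by
      funext j
      have := hF3 j
      rw [hxh] at this
      exact this.symm
    rw [this]
    exact xh.map_rel r v hv
  refine ⟨i, ω, Hom.mk xl (fun {n} fs v => hhom fs v) (fun {n} r v h => hrel r v h), hωΩ, ?_⟩
  funext a
  have hmem : (P i ∩ {F | W F = ω} ∩ {F | Xf F a = xl a} ∩ {F : Finset A | a ∈ F}) ∈ u :=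
    Filter.inter_mem (Filter.inter_mem (Filter.inter_mem hPi hωmem) (hxl a)) (humem a)
  obtain ⟨F, ⟨⟨⟨hF1, hF2⟩, hF3⟩, hF4⟩⟩ := Filter.nonempty_of_mem hmem
  obtain ⟨_, _, hval⟩ := hWX F hF1
  have := hval a hF4
  simp only [Set.mem_setOf_eq] at hF2 hF3
  rw [hF2, hF3] at this
  exact this.symm
def diagEmb (X : Type) [L.Structure X] : X ↪[L] (∀ _ : Unit, X) where
  toFun := fun a _ => a
  inj' := fun a b h => congrFun h ()
  map_fun' := fun f x => rfl
  map_rel' := fun r x => ⟨fun h => h (), fun h _ => h⟩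

/-- Joint Surjectivity Lemma.
Let `A = ISP(M)` where `M` is a finite set of finite `D`-based algebras, and for each
`M ∈ M` let `Ω_M ⊆ D(U(M), 2)`.  Then the separation condition, the point-separation
condition (2), and the covering condition (3) for `HU(A)` are equivalent. -/
theorem joint_surjectivity
    (L : FirstOrder.Language.{0,0}) (s : DSig L)
    (ι : Type) [Fintype ι] (Mf : ι → Type) [∀ i, L.Structure (Mf i)] [∀ i, Fintype (Mf i)]
    (hDbased : ∀ i, IsDAlg s (Mf i))
    (Ω : ∀ i, Set (Mf i → Bool)) (hΩ : ∀ i, ∀ ω ∈ Ω i, IsBoolDHom s ω) :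
    List.TFAE
      [ SepCond (L := L) Mf Ω,
        ∀ (A : Type) [iA : L.Structure A], ISPc (L := L) Mf A iA → ∀ a b : A, a ≠ b →
          ∃ (i : ι) (ω : Mf i → Bool) (x : A →[L] Mf i), ω ∈ Ω i ∧ ω (x a) ≠ ω (x b),
        ∀ (A : Type) [iA : L.Structure A], ISPc (L := L) Mf A iA → ∀ y : A → Bool, IsBoolDHom s y →
          ∃ (i : ι) (ω : Mf i → Bool) (x : A →[L] Mf i), ω ∈ Ω i ∧ y = ω ∘ x ] := by
  tfae_have 1 → 2 := by
    intro hsep A iA hA a b hab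
    obtain ⟨κ, g, ⟨e⟩⟩ := hA
    have hex : ∃ k, e a k ≠ e b k := by
      by_contra hc
      push_neg at hc
      exact hab (e.injective (funext hc))
    obtain ⟨k, hk⟩ := hex
    obtain ⟨j, u, ω, hω, hne⟩ := hsep (g k) (e a k) (e b k) hk
    exact ⟨j, ω, u.comp ((projHom (fun k => Mf (g k)) k).comp e.toHom), hω, hne⟩
  tfae_have 2 → 3 := by
    intro h2 A iA hA y hy
    exact main23 s Mf hDbased Ω hΩ h2 A hA y hy
  tfae_have 3 → 1 := by
    intro h3 i a b hab
    obtain ⟨f, hf, hne⟩ := finite_sep s (hDbased i) hab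
    have hisp : ISPc (L := L) Mf (Mf i) _ := ⟨Unit, fun _ => i, ⟨diagEmb (Mf i)⟩⟩
    obtain ⟨j, ω, x, hω, hyx⟩ := h3 (Mf i) hisp f hf
    refine ⟨j, x, ω, hω, ?_⟩
    rw [hyx] at hne
    exact hne
  tfae_finish


end CoproductsPaper
end
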